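/- If H and H' are conjugate subgroups of G, then the skew Hecke algebras H_R(G,H,A,α) and H_R(G,H',A,α) are isomorphic as R-algebras. -/

import Mathlib

open scoped BigOperators

def SkewHecke.IsInv {R A G : Type*} [CommRing R] [Ring A] [Algebra R A] [Group G]
    (H : Subgroup G) (α : G →* (A ≃ₐ[R] A)) (φ : G ⧸ H → A) : Prop :=
  ∀ h ∈ H, ∀ g : G, φ (QuotientGroup.mk (h * g)) = α h (φ (QuotientGroup.mk g))

def SkewHecke.IsSection {G : Type*} [Group G] {H : Subgroup G} (s : G ⧸ H → G) : Prop :=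
  ∀ c : G ⧸ H, QuotientGroup.mk (s c) = c

noncomputable def SkewHecke.conv {R A G : Type*} [CommRing R] [Ring A] [Algebra R A] [Group G]
    (H : Subgroup G) [Fintype (G ⧸ H)] (α : G →* (A ≃ₐ[R] A))
    (s : G ⧸ H → G) (φ ψ : G ⧸ H → A) : G ⧸ H → A :=
  fun x => ∑ c : G ⧸ H, φ c * α (s c) (ψ ((s c)⁻¹ • x))

noncomputable def SkewHecke.delta {A G : Type*} [Ring A] [Group G] (H : Subgroup G)
    (a : A) : G ⧸ H → A := by
  classical exact fun x => if x = QuotientGroup.mk (1 : G) then a else 0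

/-- If `H` and `H'` are conjugate subgroups of `G`, then the skew Hecke algebras
`H_R(G,H,A,α)` and `H_R(G,H',A,α)` are isomorphic as `R`-algebras. -/
theorem skewHecke_conjugate_subgroups_iso {R A G : Type*} [CommRing R] [Ring A]
    [Algebra R A] [Group G] (H H' : Subgroup G)
    [Fintype (G ⧸ H)] [Fintype (G ⧸ H')]
    (g₀ : G) (hconj : H' = Subgroup.map (MulAut.conj g₀).toMonoidHom H)
    (α : G →* (A ≃ₐ[R] A))
    (s : G ⧸ H → G) (hs : SkewHecke.IsSection s)
    (s' : G ⧸ H' → G) (hs' : SkewHecke.IsSection s') :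
    ∃ E : (G ⧸ H → A) → (G ⧸ H' → A),
      -- `E` is a bijection between the two skew Hecke algebras
      Set.BijOn E {φ | SkewHecke.IsInv H α φ} {ψ | SkewHecke.IsInv H' α ψ} ∧
      -- `E` is `R`-linear
      (∀ φ ψ, SkewHecke.IsInv H α φ → SkewHecke.IsInv H α ψ → E (φ + ψ) = E φ + E ψ) ∧
      (∀ (r : R) (φ), SkewHecke.IsInv H α φ → E (r • φ) = r • E φ) ∧
      -- `E` is multiplicative and unital
      (∀ φ ψ, SkewHecke.IsInv H α φ → SkewHecke.IsInv H α ψ →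
        E (SkewHecke.conv H α s φ ψ) = SkewHecke.conv H' α s' (E φ) (E ψ)) ∧
      E (SkewHecke.delta H (1 : A)) = SkewHecke.delta H' (1 : A) := by
  classical
  have memH' : ∀ x : G, x ∈ H' ↔ g₀⁻¹ * x * g₀ ∈ H := fun x => by
    rw [hconj, Subgroup.mem_map_equiv, MulAut.conj_symm_apply]
  -- the coset bijection q : G⧸H' → G⧸H, gH' ↦ g₀⁻¹gg₀H, with inverse q'
  let q : G ⧸ H' → G ⧸ H := Quotient.map' (fun g => g₀⁻¹ * g * g₀) (fun a b hab => by
    rw [QuotientGroup.leftRel_apply] at *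
    have h1 : (g₀⁻¹*a*g₀)⁻¹ * (g₀⁻¹*b*g₀) = g₀⁻¹ * (a⁻¹*b) * g₀ := by group
    rw [h1]; exact (memH' _).mp hab)
  let q' : G ⧸ H → G ⧸ H' := Quotient.map' (fun g => g₀ * g * g₀⁻¹) (fun a b hab => by
    rw [QuotientGroup.leftRel_apply] at *
    have h1 : (g₀*a*g₀⁻¹)⁻¹ * (g₀*b*g₀⁻¹) = g₀ * (a⁻¹*b) * g₀⁻¹ := by group
    rw [h1, memH']
    have h2 : g₀⁻¹ * (g₀ * (a⁻¹*b) * g₀⁻¹) * g₀ = a⁻¹*b := by group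
    rw [h2]; exact hab)
  have hq : ∀ g : G, q (QuotientGroup.mk g) = QuotientGroup.mk (g₀⁻¹ * g * g₀) := fun _ => rfl
  have hq' : ∀ g : G, q' (QuotientGroup.mk g) = QuotientGroup.mk (g₀ * g * g₀⁻¹) := fun _ => rfl
  have hq'q : ∀ x, q' (q x) = x := by
    intro x
    obtain ⟨u, rfl⟩ := QuotientGroup.mk_surjective x
    rw [hq, hq']; congr 1; group
  have hqq' : ∀ x, q (q' x) = x := by
    intro x
    obtain ⟨u, rfl⟩ := QuotientGroup.mk_surjective x
    rw [hq', hq]; congr 1; group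
  have αmul : ∀ (a b : G) (y : A), α (a*b) y = α a (α b y) := fun a b y => by
    rw [map_mul]; rfl
  refine ⟨fun φ x => α g₀ (φ (q x)), ⟨?_, ?_, ?_⟩, ?_, ?_, ?_, ?_⟩
  · -- MapsTo
    intro φ hφ h' hh' g
    have hh : g₀⁻¹ * h' * g₀ ∈ H := (memH' h').mp hh'
    show α g₀ (φ (q (QuotientGroup.mk (h'*g)))) = α h' (α g₀ (φ (q (QuotientGroup.mk g))))
    rw [hq, hq]
    have h1 : g₀⁻¹ * (h'*g) * g₀ = (g₀⁻¹*h'*g₀) * (g₀⁻¹*g*g₀) := by group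
    rw [h1, hφ _ hh, ← αmul, ← αmul]
    congr 2
    group
  · -- InjOn
    intro φ₁ _ φ₂ _ h
    funext y
    have h2 := congrFun h (q' y)
    simp only [hqq'] at h2
    exact (α g₀).injective h2
  · -- SurjOn
    intro ψ hψ
    refine ⟨fun y => α g₀⁻¹ (ψ (q' y)), ?_, ?_⟩
    · -- invariance of the preimage
      intro h hh g
      have hh' : g₀ * h * g₀⁻¹ ∈ H' := by
        rw [memH']
        have h1 : g₀⁻¹ * (g₀ * h * g₀⁻¹) * g₀ = h := by group
        rw [h1]; exact hh
      show α g₀⁻¹ (ψ (q' (QuotientGroup.mk (h*g)))) = α h (α g₀⁻¹ (ψ (q' (QuotientGroup.mk g))))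
      rw [hq', hq']
      have h1 : g₀ * (h*g) * g₀⁻¹ = (g₀*h*g₀⁻¹) * (g₀*g*g₀⁻¹) := by group
      rw [h1, hψ _ hh', ← αmul, ← αmul]
      congr 2
      group
    · -- E applied to it gives ψ back
      funext x
      show α g₀ (α g₀⁻¹ (ψ (q' (q x)))) = ψ x
      rw [hq'q, ← αmul, mul_inv_cancel, map_one, AlgEquiv.one_apply]
  · -- additive
    intro φ ψ _ _
    funext x
    show α g₀ ((φ + ψ) (q x)) = α g₀ (φ (q x)) + α g₀ (ψ (q x))
    rw [Pi.add_apply, map_add]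
  · -- R-linear
    intro r φ _
    funext x
    show α g₀ ((r • φ) (q x)) = r • α g₀ (φ (q x))
    rw [Pi.smul_apply, map_smul]
  · -- multiplicative
    intro φ ψ hφ hψ
    funext x
    obtain ⟨u, rfl⟩ := QuotientGroup.mk_surjective x
    show α g₀ (SkewHecke.conv H α s φ ψ (q (QuotientGroup.mk u))) = _
    unfold SkewHecke.conv
    rw [map_sum]
    have hbij : Function.Bijective q :=
      ⟨Function.LeftInverse.injective hq'q, Function.RightInverse.surjective hqq'⟩
    refine (Fintype.sum_bijective q hbij _ _ ?_).symm
    intro c'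
    -- notation
    set v := s' c' with hv
    have hvq : q c' = QuotientGroup.mk (g₀⁻¹ * v * g₀) := by rw [← hs' c', hq]
    set t := g₀⁻¹ * v * g₀ with ht
    set m := s (q c') with hm
    have hmem : t⁻¹ * m ∈ H := by
      rw [← QuotientGroup.eq, ← hvq]
      exact (hs (q c')).symm
    show (fun φ x => α g₀ (φ (q x)) : (G ⧸ H → A) → G ⧸ H' → A) φ c' *
        α (s' c') ((fun φ x => α g₀ (φ (q x)) : (G ⧸ H → A) → G ⧸ H' → A) ψ
          ((s' c')⁻¹ • QuotientGroup.mk u)) =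
      α g₀ (φ (q c') * α m (ψ (m⁻¹ • q (QuotientGroup.mk u))))
    rw [map_mul]
    congr 1
    -- the second factors
    have e1 : (s' c')⁻¹ • (QuotientGroup.mk u : G ⧸ H') = QuotientGroup.mk (v⁻¹ * u) := rfl
    have e2 : m⁻¹ • q (QuotientGroup.mk u) = QuotientGroup.mk (m⁻¹ * (g₀⁻¹ * u * g₀)) := by
      rw [hq]; rfl
    rw [e1, e2]
    show α (s' c') (α g₀ (ψ (q (QuotientGroup.mk (v⁻¹ * u))))) =
      α g₀ (α m (ψ (QuotientGroup.mk (m⁻¹ * (g₀⁻¹ * u * g₀)))))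
    rw [hq (v⁻¹ * u)]
    have e3 : m⁻¹ * (g₀⁻¹ * u * g₀) = (t⁻¹*m)⁻¹ * (t⁻¹ * (g₀⁻¹ * u * g₀)) := by group
    rw [e3, hψ _ (inv_mem hmem), ← αmul, ← αmul, ← αmul]
    have e4 : g₀⁻¹ * (v⁻¹ * u) * g₀ = t⁻¹ * (g₀⁻¹ * u * g₀) := by rw [ht]; group
    rw [e4]
    congr 2
    rw [ht]; group
    rfl
  · -- unital
    funext x
    obtain ⟨u, rfl⟩ := QuotientGroup.mk_surjective x
    have hδ : ((QuotientGroup.mk (g₀⁻¹*u*g₀) : G ⧸ H) = QuotientGroup.mk 1) ↔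
        ((QuotientGroup.mk u : G ⧸ H') = QuotientGroup.mk 1) := by
      rw [QuotientGroup.eq, QuotientGroup.eq]
      have h1 : (g₀⁻¹*u*g₀)⁻¹ * 1 = g₀⁻¹ * (u⁻¹ * 1) * g₀ := by group
      rw [h1, ← memH']
    show α g₀ (SkewHecke.delta H 1 (q (QuotientGroup.mk u))) = _
    rw [hq]
    unfold SkewHecke.delta
    by_cases hc : (QuotientGroup.mk u : G ⧸ H') = QuotientGroup.mk 1
    · rw [if_pos (hδ.mpr hc), if_pos hc, map_one]
    · rw [if_neg (fun hh => hc (hδ.mp hh)), if_neg hc, map_zero]
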